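/- Let A be an associative unital ℂ-algebra with the elements and relations described. Then for all s, t, h ∈ ℕ and all p ≥ 1 one has [J_s^⟨1⟩, X_t^{+((p);h)}] = 2·Σ_{w=0}^{p+1} C(p+1,w)·(−Q)^w·X⁺_{s+t+p·h+w} and [J_s^⟨1⟩, X_t^{−((p);h)}] = −2·Σ_{w=0}^{p+1} C(p+1,w)·(−Q)^w·X⁻_{s+t+p·h+w}, where J_m^⟨1⟩ := J_m − Q·J_{m+1}. (The right-hand sides equal ±2·X_{s+t−h}^{±((p+1);h)} when s+t ≥ h.) -/
import Mathlib


open Finset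

/-- `X_t^{±((p);h)}`: for `p > 0`, `Σ_{w=0}^{p} C(p,w)·(−Q)^w·X_{t+p·h+w}`; for `p = 0`, `1`. -/
noncomputable def Xbr {A : Type*} [Ring A] [Algebra ℂ A] (Q : ℂ) (X : ℕ → A) (t p h : ℕ) : A :=
  if p = 0 then 1
  else ∑ w ∈ Finset.range (p + 1), ((p.choose w : ℂ) * (-Q) ^ w) • X (t + p * h + w)

private lemma key_sum {A : Type*} [AddCommGroup A] [Module ℂ A] (Q : ℂ) (X : ℕ → A)
    (M p : ℕ) :
    ∑ w ∈ Finset.range (p + 1), ((p.choose w : ℂ) * (-Q) ^ w) •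
        (X (M + w) + (-Q) • X (M + w + 1)) =
      ∑ w ∈ Finset.range (p + 2), (((p + 1).choose w : ℂ) * (-Q) ^ w) • X (M + w) := by
  have lhs_split :
      ∑ w ∈ Finset.range (p + 1), ((p.choose w : ℂ) * (-Q) ^ w) •
          (X (M + w) + (-Q) • X (M + w + 1)) =
        (∑ w ∈ Finset.range (p + 1), ((p.choose w : ℂ) * (-Q) ^ w) • X (M + w)) +
        ∑ w ∈ Finset.range (p + 1), ((p.choose w : ℂ) * (-Q) ^ (w + 1)) • X (M + w + 1) := by
    rw [← Finset.sum_add_distrib]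
    refine Finset.sum_congr rfl fun w _ => ?_
    rw [smul_add, smul_smul, mul_assoc, ← pow_succ]
  rw [lhs_split]
  -- rewrite RHS using Pascal
  rw [Finset.sum_range_succ' (fun w => (((p + 1).choose w : ℂ) * (-Q) ^ w) • X (M + w)) (p + 1)]
  rw [Finset.sum_range_succ' (fun w => ((p.choose w : ℂ) * (-Q) ^ w) • X (M + w)) p]
  have hA1 : ∀ i ∈ Finset.range (p + 1),
      (((p + 1).choose (i + 1) : ℂ) * (-Q) ^ (i + 1)) • X (M + (i + 1)) =
        ((p.choose (i + 1) : ℂ) * (-Q) ^ (i + 1)) • X (M + (i + 1)) +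
        ((p.choose i : ℂ) * (-Q) ^ (i + 1)) • X (M + i + 1) := by
    intro i _
    rw [Nat.choose_succ_succ]
    push_cast
    rw [add_mul, add_smul, add_comm]
    rfl
  rw [Finset.sum_congr rfl hA1, Finset.sum_add_distrib]
  have hz : ∑ i ∈ Finset.range (p + 1), ((p.choose (i + 1) : ℂ) * (-Q) ^ (i + 1)) • X (M + (i + 1))
      = ∑ i ∈ Finset.range p, ((p.choose (i + 1) : ℂ) * (-Q) ^ (i + 1)) • X (M + (i + 1)) := by
    rw [Finset.sum_range_succ, Nat.choose_succ_self]
    simp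
  rw [hz]
  simp only [Nat.choose_zero_right, Nat.cast_one, pow_zero, mul_one, one_smul, Nat.add_eq]
  abel

private lemma aux_comm {A : Type*} [Ring A] [Algebra ℂ A] (Q c : ℂ) (X J : ℕ → A)
    (hX : ∀ s m, J s * X m - X m * J s = c • X (s + m))
    (s t h p : ℕ) (hp : 1 ≤ p) :
    (J s - Q • J (s + 1)) * Xbr Q X t p h - Xbr Q X t p h * (J s - Q • J (s + 1)) =
      c • ∑ w ∈ Finset.range (p + 2),
        (((p + 1).choose w : ℂ) * (-Q) ^ w) • X (s + t + p * h + w) := by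
  have hp0 : p ≠ 0 := Nat.one_le_iff_ne_zero.mp hp
  rw [Xbr, if_neg hp0]
  have step : ∀ w,
      (J s - Q • J (s + 1)) * X (t + p * h + w) - X (t + p * h + w) * (J s - Q • J (s + 1)) =
        c • (X (s + t + p * h + w) + (-Q) • X (s + t + p * h + w + 1)) := by
    intro w
    have h1 := hX s (t + p * h + w)
    have h2 := hX (s + 1) (t + p * h + w)
    rw [show s + (t + p * h + w) = s + t + p * h + w from by omega] at h1
    rw [show s + 1 + (t + p * h + w) = s + t + p * h + w + 1 from by omega] at h2
    have expand : (J s - Q • J (s + 1)) * X (t + p * h + w) -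
        X (t + p * h + w) * (J s - Q • J (s + 1)) =
        (J s * X (t + p * h + w) - X (t + p * h + w) * J s) -
          Q • (J (s + 1) * X (t + p * h + w) - X (t + p * h + w) * J (s + 1)) := by
      rw [sub_mul, mul_sub, smul_mul_assoc, mul_smul_comm, smul_sub]
      abel
    rw [expand, h1, h2]
    module
  rw [Finset.mul_sum, Finset.sum_mul, ← Finset.sum_sub_distrib]
  have terms : ∀ w ∈ Finset.range (p + 1),
      (J s - Q • J (s + 1)) * (((p.choose w : ℂ) * (-Q) ^ w) • X (t + p * h + w)) -
        (((p.choose w : ℂ) * (-Q) ^ w) • X (t + p * h + w)) * (J s - Q • J (s + 1)) =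
      c • (((p.choose w : ℂ) * (-Q) ^ w) •
        (X (s + t + p * h + w) + (-Q) • X (s + t + p * h + w + 1))) := by
    intro w _
    rw [mul_smul_comm, smul_mul_assoc, ← smul_sub, step w, smul_comm]
  rw [Finset.sum_congr rfl terms, ← Finset.smul_sum, key_sum Q X (s + t + p * h) p]

theorem stmt2 {A : Type*} [Ring A] [Algebra ℂ A] (Q : ℂ) (Xp Xm J : ℕ → A)
    (hL1 : ∀ s t, J s * J t = J t * J s)
    (hL2p : ∀ s t, J s * Xp t - Xp t * J s = (2 : ℂ) • Xp (s + t))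
    (hL2m : ∀ s t, J s * Xm t - Xm t * J s = -((2 : ℂ) • Xm (s + t)))
    (hL3 : ∀ s t, Xp t * Xm s - Xm s * Xp t = J (s + t) - Q • J (s + t + 1))
    (hL4p : ∀ s t, Xp t * Xp s = Xp s * Xp t)
    (hL4m : ∀ s t, Xm t * Xm s = Xm s * Xm t)
    (s t h p : ℕ) (hp : 1 ≤ p) :
    ((J s - Q • J (s + 1)) * Xbr Q Xp t p h - Xbr Q Xp t p h * (J s - Q • J (s + 1)) =
      (2 : ℂ) • ∑ w ∈ Finset.range (p + 2),
        (((p + 1).choose w : ℂ) * (-Q) ^ w) • Xp (s + t + p * h + w)) ∧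
    ((J s - Q • J (s + 1)) * Xbr Q Xm t p h - Xbr Q Xm t p h * (J s - Q • J (s + 1)) =
      -((2 : ℂ) • ∑ w ∈ Finset.range (p + 2),
        (((p + 1).choose w : ℂ) * (-Q) ^ w) • Xm (s + t + p * h + w))) := by
  constructor
  · exact aux_comm Q 2 Xp J hL2p s t h p hp
  · have hm : ∀ s m, J s * Xm m - Xm m * J s = (-2 : ℂ) • Xm (s + m) := by
      intro s m; rw [hL2m]; module
    have := aux_comm Q (-2) Xm J hm s t h p hp
    rw [this]
    module
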